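/- For a bi-directed graph G, the simplicial graph G^s, obtained by dropping all arrowheads at simplicial vertices of G, is a maximal ancestral graph that is Markov equivalent to G. -/

import Mathlib

/-- Possible edge types between an ordered pair of distinct vertices of a
simple mixed graph.  `arrowTo` at `(v, w)` means `v → w`, `arrowFrom` means
`v ← w`, `undir` means `v − w` and `bidir` means `v ↔ w`. -/
inductive EType : Type
  | none | undir | arrowTo | arrowFrom | bidir
deriving DecidableEq

/-- The edge type seen from the reversed ordered pair of vertices. -/
def EType.mirror : EType → EType
  | .none => .none
  | .undir => .undir
  | .arrowTo => .arrowFrom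
  | .arrowFrom => .arrowTo
  | .bidir => .bidir

/-- A simple mixed graph: at most one edge (undirected, directed or
bi-directed) between any two distinct vertices, and no self loops. -/
structure MixedGraph (V : Type) where
  E : V → V → EType
  no_loop : ∀ v, E v v = .none
  symm : ∀ v w, E w v = (E v w).mirror

/-- `(a, b, c)` are three consecutive vertices on the path `p`. -/
def ConsecTriple {V : Type} (p : List V) (a b c : V) : Prop :=
  ∃ l1 l2, p = l1 ++ a :: b :: c :: l2

namespace MixedGraph

variable {V : Type} (G : MixedGraph V)

/-- `v − w` is an edge of `G`. -/
def Undir (v w : V) : Prop := G.E v w = .undir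

/-- `v → w` is an edge of `G`. -/
def Dir (v w : V) : Prop := G.E v w = .arrowTo

/-- `v ↔ w` is an edge of `G`. -/
def Bidir (v w : V) : Prop := G.E v w = .bidir

/-- `v` and `w` are adjacent (joined by some edge). -/
def Adj (v w : V) : Prop := G.E v w ≠ .none

/-- The edge between `a` and `b` has an arrowhead at `b`. -/
def HeadAt (a b : V) : Prop := G.E a b = .arrowTo ∨ G.E a b = .bidir

/-- Closed boundary: `v` together with its adjacent vertices. -/
def Bd (v : V) : Set V := insert v {w | G.Adj v w}

/-- A set of vertices is complete if all of its pairs of distinct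
vertices are adjacent. -/
def Complete (S : Set V) : Prop := ∀ v ∈ S, ∀ w ∈ S, v ≠ w → G.Adj v w

/-- A vertex is simplicial if its closed boundary is complete. -/
def Simplicial (v : V) : Prop := G.Complete (G.Bd v)

/-- `v` is an ancestor of `w`: `v = w` or there is a directed path from
`v` to `w`. -/
def Anc (v w : V) : Prop := Relation.ReflTransGen G.Dir v w

/-- The set of ancestors of vertices in `C`. -/
def anSet (C : Set V) : Set V := {v | ∃ c ∈ C, G.Anc v c}

/-- `G` is an ancestral graph. -/
def Ancestral : Prop :=
  (∀ v w, G.Dir v w → ¬ G.Anc w v) ∧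
  (∀ v w, G.Undir v w → ∀ u, ¬ G.HeadAt u v) ∧
  (∀ v w, G.Bidir v w → ¬ G.Anc v w)

/-- The boundary containment property. -/
def BdContain : Prop :=
  (∀ v w, G.Undir v w → G.Bd v = G.Bd w) ∧
  (∀ v w, G.Dir v w → G.Bd v ⊆ G.Bd w)

/-- `b` is a collider between consecutive neighbours `a` and `c`. -/
def Collider (a b c : V) : Prop := G.HeadAt a b ∧ G.HeadAt c b

/-- A path: a list of distinct vertices, consecutive ones adjacent. -/
def IsPath (p : List V) : Prop := p.Nodup ∧ p.Chain' G.Adj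

/-- `p` is an m-connecting path given `C`: every non-collider on it is
outside `C` and every collider on it is an ancestor of `C`. -/
def IsMConnPath (C : Set V) (p : List V) : Prop :=
  G.IsPath p ∧
  ∀ a b c, ConsecTriple p a b c →
    (G.Collider a b c → b ∈ G.anSet C) ∧ (¬ G.Collider a b c → b ∉ C)

/-- `v` and `w` are m-connected given `C`. -/
def MConn (v w : V) (C : Set V) : Prop :=
  ∃ p, G.IsMConnPath C p ∧ p.head? = some v ∧ p.getLast? = some w

/-- `v` and `w` are m-separated given `C`. -/
def MSep (v w : V) (C : Set V) : Prop := ¬ G.MConn v w C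

/-- A maximal (ancestral) graph: every pair of distinct non-adjacent
vertices is m-separated given some set. -/
def Maximal : Prop :=
  ∀ v w, v ≠ w → ¬ G.Adj v w → ∃ C : Set V, v ∉ C ∧ w ∉ C ∧ G.MSep v w C

/-- `G` is a bi-directed graph. -/
def Bidirected : Prop := ∀ v w, G.E v w = .none ∨ G.E v w = .bidir

/-- `G` is an undirected graph. -/
def UndirectedG : Prop := ∀ v w, G.E v w = .none ∨ G.E v w = .undir

/-- `G` is a directed acyclic graph. -/
def IsDAG : Prop :=
  (∀ v w, G.E v w = .none ∨ G.E v w = .arrowTo ∨ G.E v w = .arrowFrom) ∧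
  (∀ v w, G.Dir v w → ¬ G.Anc w v)

/-- `G` and `H` have the same skeleton. -/
def SameSkeleton (H : MixedGraph V) : Prop := ∀ v w, G.Adj v w ↔ H.Adj v w

/-- `G` and `H` are Markov equivalent: their m-separation relations
coincide. -/
def MarkovEquiv (H : MixedGraph V) : Prop :=
  ∀ v w (C : Set V), v ≠ w → v ∉ C → w ∉ C → (G.MSep v w C ↔ H.MSep v w C)

open Classical in
/-- The edge map obtained from `G` by dropping all arrowheads at
simplicial vertices. -/
noncomputable def dropE (v w : V) : EType :=
  match G.E v w with
  | .none => .none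
  | .undir => .undir
  | .arrowTo => if G.Simplicial w then .undir else .arrowTo
  | .arrowFrom => if G.Simplicial v then .undir else .arrowFrom
  | .bidir =>
      if G.Simplicial v then (if G.Simplicial w then .undir else .arrowTo)
      else (if G.Simplicial w then .arrowFrom else .bidir)

/-- The graph obtained from `G` by dropping all arrowheads at simplicial
vertices; for a bi-directed graph `G` this is the simplicial graph `Gˢ`. -/
noncomputable def drop : MixedGraph V where
  E := G.dropE
  no_loop v := by simp [dropE, G.no_loop]
  symm v w := by
    unfold dropE
    rw [G.symm v w]
    cases h : G.E v w <;>
      simp only [EType.mirror] <;> split_ifs <;> simp_all [EType.mirror]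

open Classical in
/-- The edge map of the minimally oriented graph `G^min_<`: starting from
the simplicial graph, each bi-directed edge `v ↔ w` with `Bd v ⊆ Bd w`
and `v < w` is replaced by `v → w`. -/
noncomputable def gminE [LinearOrder V] (v w : V) : EType :=
  match G.dropE v w with
  | .bidir =>
      if G.Bd v ⊆ G.Bd w ∧ v < w then .arrowTo
      else if G.Bd w ⊆ G.Bd v ∧ w < v then .arrowFrom
      else .bidir
  | e => e

/-- The graph `G^min_<` produced by Algorithm 4.2 from `G` and the total
order on `V`. -/
noncomputable def gmin [LinearOrder V] : MixedGraph V where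
  E := G.gminE
  no_loop v := by
    have h := G.drop.no_loop v
    simp only [drop] at h
    simp [gminE, h]
  symm v w := by
    have h := G.drop.symm v w
    simp only [drop] at h
    unfold gminE
    rw [h]
    cases hE : G.dropE v w <;> simp only [EType.mirror]
    case bidir =>
      by_cases c1 : G.Bd v ⊆ G.Bd w ∧ v < w
      · have c2 : ¬ (G.Bd w ⊆ G.Bd v ∧ w < v) := fun h' => lt_asymm c1.2 h'.2
        simp [c1, c2, EType.mirror]
      · by_cases c2 : G.Bd w ⊆ G.Bd v ∧ w < v
        · simp [c1, c2, EType.mirror]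
        · simp [c1, c2, EType.mirror]

/-- Total number of arrowheads of `G`: the number of directed edges plus
twice the number of bi-directed edges. -/
noncomputable def arr : ℕ :=
  {p : V × V | G.Dir p.1 p.2}.ncard + {p : V × V | G.Bidir p.1 p.2}.ncard

end MixedGraph

/-- `Gm` is a minimally oriented graph for `G`. -/
def MinOriented {V : Type} (G Gm : MixedGraph V) : Prop :=
  Gm.Ancestral ∧ Gm.Maximal ∧ G.MarkovEquiv Gm ∧
  ∀ H : MixedGraph V, H.Ancestral → H.Maximal → G.MarkovEquiv H → Gm.arr ≤ H.arr

section Aux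

open List

lemma EType.mirror_eq_none {e : EType} : e.mirror = EType.none ↔ e = EType.none := by
  cases e <;> simp [EType.mirror]

namespace MixedGraph

variable {V : Type} {G : MixedGraph V}

lemma adj_symm {v w : V} (h : G.Adj v w) : G.Adj w v := by
  unfold Adj at h ⊢
  rw [G.symm, ne_eq, EType.mirror_eq_none]
  exact h

lemma adj_ne {v w : V} (h : G.Adj v w) : v ≠ w := by
  rintro rfl; exact h (G.no_loop v)

lemma drop_E {v w : V} : G.drop.E v w = G.dropE v w := rfl

lemma dropE_eq_none {v w : V} : G.dropE v w = EType.none ↔ G.E v w = EType.none := by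
  cases h : G.E v w <;> simp [dropE, h] <;> split_ifs <;> simp

lemma drop_adj {v w : V} : G.drop.Adj v w ↔ G.Adj v w := by
  unfold Adj
  rw [drop_E, ne_eq, dropE_eq_none]

lemma adj_bidir (hG : G.Bidirected) {v w : V} (h : G.Adj v w) : G.E v w = EType.bidir :=
  (hG v w).resolve_left h

lemma drop_dir_iff (hG : G.Bidirected) {v w : V} :
    G.drop.Dir v w ↔ G.E v w = EType.bidir ∧ G.Simplicial v ∧ ¬ G.Simplicial w := by
  unfold Dir
  rw [drop_E]
  rcases hG v w with h | h <;> simp [dropE, h] <;> split_ifs with h1 h2 <;> simp_all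

lemma drop_undir_iff (hG : G.Bidirected) {v w : V} :
    G.drop.Undir v w ↔ G.E v w = EType.bidir ∧ G.Simplicial v ∧ G.Simplicial w := by
  unfold Undir
  rw [drop_E]
  rcases hG v w with h | h <;> simp [dropE, h] <;> split_ifs with h1 h2 <;> simp_all

lemma drop_bidir_iff (hG : G.Bidirected) {v w : V} :
    G.drop.Bidir v w ↔ G.E v w = EType.bidir ∧ ¬ G.Simplicial v ∧ ¬ G.Simplicial w := by
  unfold Bidir
  rw [drop_E]
  rcases hG v w with h | h <;> simp [dropE, h] <;> split_ifs with h1 h2 <;> simp_all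

lemma drop_headAt_iff (hG : G.Bidirected) {a b : V} :
    G.drop.HeadAt a b ↔ G.E a b = EType.bidir ∧ ¬ G.Simplicial b := by
  unfold HeadAt
  rcases hG a b with h | h <;> simp [drop_E, dropE, h] <;> split_ifs with h1 h2 <;> simp_all

lemma not_dir (hG : G.Bidirected) {v w : V} : ¬ G.Dir v w := by
  rcases hG v w with h | h <;> simp [Dir, h]

lemma anc_iff (hG : G.Bidirected) {v w : V} : G.Anc v w ↔ v = w := by
  constructor
  · intro h
    induction h with
    | refl => rfl
    | tail _ hd _ => exact absurd hd (not_dir hG)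
  · rintro rfl; exact Relation.ReflTransGen.refl

lemma anSet_eq (hG : G.Bidirected) (C : Set V) : G.anSet C = C := by
  ext v
  simp [anSet, anc_iff hG]

lemma drop_anSet_nonsimp (hG : G.Bidirected) {b : V} {C : Set V}
    (hb : ¬ G.Simplicial b) (h : b ∈ G.drop.anSet C) : b ∈ C := by
  obtain ⟨c, hc, hanc⟩ := h
  rcases hanc.cases_head with rfl | ⟨x, hd, _⟩
  · exact hc
  · exact absurd ((drop_dir_iff hG).1 hd).2.1 hb

lemma drop_ancestral (hG : G.Bidirected) : G.drop.Ancestral := by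
  refine ⟨?_, ?_, ?_⟩
  · intro v w hd hanc
    obtain ⟨hE, hv, hw⟩ := (drop_dir_iff hG).1 hd
    rcases hanc.cases_head with rfl | ⟨x, hd', _⟩
    · rw [G.no_loop] at hE; exact EType.noConfusion hE
    · exact hw ((drop_dir_iff hG).1 hd').2.1
  · intro v w hu u hh
    exact ((drop_headAt_iff hG).1 hh).2 ((drop_undir_iff hG).1 hu).2.1
  · intro v w hb hanc
    obtain ⟨hE, hv, hw⟩ := (drop_bidir_iff hG).1 hb
    rcases hanc.cases_head with rfl | ⟨x, hd', _⟩
    · rw [G.no_loop] at hE; exact EType.noConfusion hE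
    · exact hv ((drop_dir_iff hG).1 hd').2.1

lemma simplicial_adj {a b c : V} (hb : G.Simplicial b) (h1 : G.Adj a b)
    (h2 : G.Adj b c) (hac : a ≠ c) : G.Adj a c :=
  hb a (Or.inr (adj_symm h1)) c (Or.inr h2) hac

end MixedGraph

end Aux

section Aux2

open List

namespace MixedGraph

variable {V : Type} {G : MixedGraph V}

lemma triple_mem_split {p : List V} {b : V} :
    (∃ a c, ConsecTriple p a b c) ↔ ∃ l1 l2, p = l1 ++ b :: l2 ∧ l1 ≠ [] ∧ l2 ≠ [] := by
  constructor
  · rintro ⟨a, c, l1, l2, rfl⟩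
    exact ⟨l1 ++ [a], c :: l2, by simp, by simp, by simp⟩
  · rintro ⟨l1, l2, rfl, h1, h2⟩
    rcases l1.eq_nil_or_concat with rfl | ⟨L, a, rfl⟩
    · exact absurd rfl h1
    rcases l2 with _ | ⟨c, l2⟩
    · exact absurd rfl h2
    exact ⟨a, c, L, l2, by simp⟩

lemma internal_iff {p : List V} (hp : p.Nodup) {b : V} :
    (∃ a c, ConsecTriple p a b c) ↔ b ∈ p ∧ p.head? ≠ some b ∧ p.getLast? ≠ some b := by
  rw [triple_mem_split]
  constructor
  · rintro ⟨l1, l2, rfl, h1, h2⟩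
    rw [List.nodup_append] at hp
    refine ⟨by simp, ?_, ?_⟩
    · rcases l1 with _ | ⟨x, t⟩
      · exact absurd rfl h1
      simp only [List.cons_append, List.head?_cons, ne_eq, Option.some.injEq]
      rintro rfl
      exact hp.2.2 _ List.mem_cons_self _ List.mem_cons_self rfl
    · rcases l2.eq_nil_or_concat with rfl | ⟨L, c, rfl⟩
      · exact absurd rfl h2
      intro heq
      rw [show l1 ++ b :: L.concat c = (l1 ++ b :: L) ++ [c] by simp,
        List.getLast?_concat] at heq
      obtain rfl : c = b := by injection heq
      exact (List.nodup_cons.1 hp.2.1).1 (by simp)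
  · rintro ⟨hmem, hh, hl⟩
    obtain ⟨s, t, rfl⟩ := List.append_of_mem hmem
    refine ⟨s, t, rfl, ?_, ?_⟩
    · rintro rfl; exact hh (by simp)
    · rintro rfl; exact hl (by simpa using List.getLast?_concat s)

lemma triple_adj {R : V → V → Prop} {p : List V} {a b c : V}
    (hc : p.Chain' R) (h : ConsecTriple p a b c) : R a b ∧ R b c := by
  obtain ⟨l1, l2, rfl⟩ := h
  unfold List.Chain' at hc
  rw [List.isChain_append] at hc
  have h2 := hc.2.1
  rw [List.isChain_cons_cons, List.isChain_cons_cons] at h2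
  exact ⟨h2.1, h2.2.1⟩

lemma triple_ne {p : List V} {a b c : V} (hp : p.Nodup) (h : ConsecTriple p a b c) :
    a ≠ c := by
  obtain ⟨l1, l2, rfl⟩ := h
  have := (List.nodup_append.1 hp).2.1
  simp only [List.nodup_cons, List.mem_cons] at this
  exact fun hac => this.1 (Or.inr (Or.inl hac))

lemma shorten_isPath {b : V} {l1 l2 : List V} {a c : V} (hb : G.Simplicial b)
    (h : G.IsPath (l1 ++ a :: b :: c :: l2)) : G.IsPath (l1 ++ a :: c :: l2) := by
  obtain ⟨hn, hc⟩ := h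
  have hsub : (l1 ++ a :: c :: l2) <+ (l1 ++ a :: b :: c :: l2) :=
    List.Sublist.append_left ((List.sublist_cons_self b (c :: l2)).cons₂ a) l1
  have hac : a ≠ c := triple_ne hn ⟨l1, l2, rfl⟩
  refine ⟨hn.sublist hsub, ?_⟩
  unfold List.Chain' at hc ⊢
  rw [List.isChain_append] at hc ⊢
  refine ⟨hc.1, ?_, by simpa using hc.2.2⟩
  have h2 := hc.2.1
  rw [List.isChain_cons_cons, List.isChain_cons_cons] at h2
  rw [List.isChain_cons_cons]
  exact ⟨simplicial_adj hb h2.1 h2.2.1 hac, h2.2.2⟩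

lemma desimp (G : MixedGraph V) :
    ∀ n (p : List V), p.length ≤ n → G.IsPath p →
    ∃ q, G.IsPath q ∧ q.head? = p.head? ∧ q.getLast? = p.getLast? ∧
      ∀ b, (∃ a c, ConsecTriple q a b c) →
        ¬ G.Simplicial b ∧ (∃ a c, ConsecTriple p a b c) := by
  intro n
  induction n with
  | zero =>
    intro p hl hp
    refine ⟨p, hp, rfl, rfl, fun b hb => ?_⟩
    obtain rfl : p = [] := List.eq_nil_of_length_eq_zero (Nat.le_zero.1 hl)
    obtain ⟨a, c, m1, m2, heq⟩ := hb
    exact absurd heq (by simp)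
  | succ n ih =>
    intro p hl hp
    by_cases h : ∃ b, G.Simplicial b ∧ ∃ a c, ConsecTriple p a b c
    · obtain ⟨b, hb, a, c, l1, l2, rfl⟩ := h
      have hp' : G.IsPath (l1 ++ a :: c :: l2) := shorten_isPath hb hp
      have hlen : (l1 ++ a :: c :: l2).length ≤ n := by
        simp only [List.length_append, List.length_cons] at hl ⊢; omega
      obtain ⟨q, hq, hh, hlast, hint⟩ := ih _ hlen hp'
      have hsub : (l1 ++ a :: c :: l2) <+ (l1 ++ a :: b :: c :: l2) :=
        List.Sublist.append_left ((List.sublist_cons_self b (c :: l2)).cons₂ a) l1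
      have ehead : (l1 ++ a :: c :: l2).head? = (l1 ++ a :: b :: c :: l2).head? := by
        rcases l1 with _ | ⟨x, t⟩ <;> simp
      have elast : (l1 ++ a :: c :: l2).getLast? = (l1 ++ a :: b :: c :: l2).getLast? := by
        rw [show l1 ++ a :: c :: l2 = (l1 ++ [a]) ++ (c :: l2) by simp,
          show l1 ++ a :: b :: c :: l2 = (l1 ++ [a, b]) ++ (c :: l2) by simp,
          List.getLast?_append_of_ne_nil _ (List.cons_ne_nil _ _),
          List.getLast?_append_of_ne_nil _ (List.cons_ne_nil _ _)]
      refine ⟨q, hq, hh.trans ehead, hlast.trans elast, fun b' hb' => ?_⟩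
      obtain ⟨hns, hintp'⟩ := hint b' hb'
      refine ⟨hns, ?_⟩
      rw [internal_iff hp'.1] at hintp'
      rw [internal_iff hp.1]
      exact ⟨hsub.mem hintp'.1, by rw [← ehead]; exact hintp'.2.1,
        by rw [← elast]; exact hintp'.2.2⟩
    · exact ⟨p, hp, rfl, rfl, fun b hb => ⟨fun hs => h ⟨b, hs, hb⟩, hb⟩⟩

end MixedGraph

end Aux2

section Aux3

open List

namespace MixedGraph

variable {V : Type} {G : MixedGraph V}

lemma collider_G (hG : G.Bidirected) {a b c : V} (h1 : G.Adj a b) (h2 : G.Adj b c) :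
    G.Collider a b c :=
  ⟨Or.inr (adj_bidir hG h1), Or.inr (adj_bidir hG (adj_symm h2))⟩

lemma drop_collider_iff (hG : G.Bidirected) {a b c : V} (h1 : G.Adj a b) (h2 : G.Adj b c) :
    G.drop.Collider a b c ↔ ¬ G.Simplicial b := by
  unfold Collider
  rw [drop_headAt_iff hG, drop_headAt_iff hG]
  simp [adj_bidir hG h1, adj_bidir hG (adj_symm h2)]

lemma mconn_G_iff (hG : G.Bidirected) {C : Set V} {p : List V} :
    G.IsMConnPath C p ↔ G.IsPath p ∧ ∀ b, (∃ a c, ConsecTriple p a b c) → b ∈ C := by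
  constructor
  · rintro ⟨hp, h⟩
    refine ⟨hp, ?_⟩
    rintro b ⟨a, c, ht⟩
    have hadj := triple_adj hp.2 ht
    have := (h a b c ht).1 (collider_G hG hadj.1 hadj.2)
    rwa [anSet_eq hG] at this
  · rintro ⟨hp, h⟩
    refine ⟨hp, fun a b c ht => ⟨fun _ => ?_, fun hnc => ?_⟩⟩
    · rw [anSet_eq hG]; exact h b ⟨a, c, ht⟩
    · have hadj := triple_adj hp.2 ht
      exact absurd (collider_G hG hadj.1 hadj.2) hnc

lemma drop_isPath_iff {p : List V} : G.drop.IsPath p ↔ G.IsPath p := by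
  unfold IsPath
  exact and_congr Iff.rfl ⟨fun h => h.imp fun _ _ hh => drop_adj.1 hh,
    fun h => h.imp fun _ _ hh => drop_adj.2 hh⟩

lemma mconn_drop_iff (hG : G.Bidirected) {C : Set V} {p : List V} :
    G.drop.IsMConnPath C p ↔ G.IsPath p ∧ ∀ b, (∃ a c, ConsecTriple p a b c) →
      ((¬ G.Simplicial b → b ∈ C) ∧ (G.Simplicial b → b ∉ C)) := by
  constructor
  · rintro ⟨hp, h⟩
    have hpG := drop_isPath_iff.1 hp
    refine ⟨hpG, ?_⟩
    rintro b ⟨a, c, ht⟩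
    have hadj := triple_adj hpG.2 ht
    constructor
    · intro hns
      exact drop_anSet_nonsimp hG hns
        ((h a b c ht).1 ((drop_collider_iff hG hadj.1 hadj.2).2 hns))
    · intro hs
      refine (h a b c ht).2 ?_
      rw [drop_collider_iff hG hadj.1 hadj.2]
      exact fun hns => hns hs
  · rintro ⟨hp, h⟩
    refine ⟨drop_isPath_iff.2 hp, fun a b c ht => ?_⟩
    have hadj := triple_adj hp.2 ht
    have hcol := drop_collider_iff hG (a := a) (c := c) hadj.1 hadj.2
    constructor
    · intro hc
      have hns := hcol.1 hc
      exact ⟨b, (h b ⟨a, c, ht⟩).1 hns, Relation.ReflTransGen.refl⟩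
    · intro hnc
      by_cases hs : G.Simplicial b
      · exact (h b ⟨a, c, ht⟩).2 hs
      · exact absurd (hcol.2 hs) hnc

lemma mconn_iff (hG : G.Bidirected) {v w : V} {C : Set V} :
    G.MConn v w C ↔ G.drop.MConn v w C := by
  constructor
  · rintro ⟨p, hp, hh, hl⟩
    rw [mconn_G_iff hG] at hp
    obtain ⟨q, hq, hqh, hql, hint⟩ := desimp G p.length p le_rfl hp.1
    refine ⟨q, ?_, hqh.trans hh, hql.trans hl⟩
    rw [mconn_drop_iff hG]
    refine ⟨hq, fun b hb => ?_⟩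
    obtain ⟨hns, hintp⟩ := hint b hb
    exact ⟨fun _ => hp.2 b hintp, fun hs => absurd hs hns⟩
  · rintro ⟨p, hp, hh, hl⟩
    rw [mconn_drop_iff hG] at hp
    obtain ⟨q, hq, hqh, hql, hint⟩ := desimp G p.length p le_rfl hp.1
    refine ⟨q, ?_, hqh.trans hh, hql.trans hl⟩
    rw [mconn_G_iff hG]
    refine ⟨hq, fun b hb => ?_⟩
    obtain ⟨hns, hintp⟩ := hint b hb
    exact (hp.2 b hintp).1 hns

lemma drop_maximal (hG : G.Bidirected) : G.drop.Maximal := by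
  intro v w hvw hadj
  refine ⟨∅, Set.notMem_empty v, Set.notMem_empty w, fun hcon => ?_⟩
  obtain ⟨p, hp, hh, hl⟩ := hcon
  rw [mconn_drop_iff hG] at hp
  have hints : ∀ b, (∃ a c, ConsecTriple p a b c) → G.Simplicial b := by
    intro b hb
    by_contra hns
    exact (hp.2 b hb).1 hns
  obtain ⟨q, hq, hqh, hql, hint⟩ := desimp G p.length p le_rfl hp.1
  have hq2 : ∀ b, ¬ (∃ a c, ConsecTriple q a b c) := fun b hb =>
    (hint b hb).1 (hints b (hint b hb).2)
  rw [hh] at hqh; rw [hl] at hql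
  rcases q with _ | ⟨x, q⟩
  · simp at hqh
  rcases q with _ | ⟨y, q⟩
  · obtain rfl : x = v := by injection hqh
    obtain rfl : x = w := by injection hql
    exact hvw rfl
  rcases q with _ | ⟨z, q⟩
  · obtain rfl : x = v := by injection hqh
    obtain rfl : y = w := by injection hql
    exact hadj (drop_adj.2 (List.isChain_cons_cons.1 hq.2).1)
  · exact hq2 y ⟨x, z, [], q, rfl⟩

end MixedGraph

end Aux3


/-- The simplicial graph `Gˢ` of a bi-directed graph `G`
(obtained by dropping all arrowheads at simplicial vertices) is a maximal
ancestral graph Markov equivalent to `G`. -/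
theorem stmt8 {V : Type} (G : MixedGraph V) (hG : G.Bidirected) :
    (G.drop).Ancestral ∧ (G.drop).Maximal ∧ G.MarkovEquiv G.drop := by
  refine ⟨MixedGraph.drop_ancestral hG, MixedGraph.drop_maximal hG, ?_⟩
  intro v w C _ _ _
  exact not_congr (MixedGraph.mconn_iff hG)
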